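/- Let E and F be real normed vector spaces, let h : E → F and φ : F → ℝ be three times continuously differentiable, and let L₁, L₂, L₃, M₁, M₂, M₃ ≥ 0 be such that ‖D^j h(x)‖ ≤ L_j for all x ∈ E and ‖D^j φ(y)‖ ≤ M_j for all y ∈ F, for j = 1, 2, 3, where D^j denotes the j-th iterated Fréchet derivative. Then for every x ∈ E, ∑_{m=1}^{3} ‖D^m(φ ∘ h)(x)‖ ≤ max{ L₁ + L₂ + L₃, L₁² + 3·L₁·L₂, L₁³ } · (M₁ + M₂ + M₃). -/

import Mathlib

open ContinuousLinearMap

section aux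

variable {E F G : Type*} [NormedAddCommGroup E] [NormedSpace ℝ E]
  [NormedAddCommGroup F] [NormedSpace ℝ F]
  [NormedAddCommGroup G] [NormedSpace ℝ G]

lemma norm_iteratedFDeriv_one_eq {E G : Type*} [NormedAddCommGroup E] [NormedSpace ℝ E]
    [NormedAddCommGroup G] [NormedSpace ℝ G] (f : E → G) (x : E) :
    ‖iteratedFDeriv ℝ 1 f x‖ = ‖fderiv ℝ f x‖ := by
  rw [← norm_iteratedFDeriv_fderiv, norm_iteratedFDeriv_zero]

lemma fderiv_comp_eq_compL (ψ : F → G) (h : E → F)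
    (hψ : ContDiff ℝ 1 ψ) (hh : ContDiff ℝ 1 h) :
    fderiv ℝ (ψ ∘ h) = fun x => compL ℝ E F G (fderiv ℝ ψ (h x)) (fderiv ℝ h x) := by
  funext x
  rw [compL_apply]
  exact fderiv_comp x (hψ.differentiable one_ne_zero (h x)) (hh.differentiable one_ne_zero x)

lemma comp_bound1 (ψ : F → G) (h : E → F)
    (hψ : ContDiff ℝ 1 ψ) (hh : ContDiff ℝ 1 h) {N₁ L₁ : ℝ}
    (hN : ∀ y, ‖iteratedFDeriv ℝ 1 ψ y‖ ≤ N₁)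
    (hL : ∀ x, ‖iteratedFDeriv ℝ 1 h x‖ ≤ L₁) (x : E) :
    ‖iteratedFDeriv ℝ 1 (ψ ∘ h) x‖ ≤ N₁ * L₁ := by
  rw [norm_iteratedFDeriv_one_eq]
  rw [fderiv_comp x (hψ.differentiable one_ne_zero (h x)) (hh.differentiable one_ne_zero x)]
  calc ‖(fderiv ℝ ψ (h x)).comp (fderiv ℝ h x)‖
      ≤ ‖fderiv ℝ ψ (h x)‖ * ‖fderiv ℝ h x‖ := opNorm_comp_le _ _
    _ ≤ N₁ * L₁ := by
        have b1 : ‖fderiv ℝ ψ (h x)‖ ≤ N₁ := by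
          rw [← norm_iteratedFDeriv_one_eq]; exact hN _
        have b2 : ‖fderiv ℝ h x‖ ≤ L₁ := by
          rw [← norm_iteratedFDeriv_one_eq]; exact hL _
        exact mul_le_mul b1 b2 (norm_nonneg _) (le_trans (norm_nonneg _) b1)

lemma comp_bound2 (ψ : F → G) (h : E → F)
    (hψ : ContDiff ℝ 2 ψ) (hh : ContDiff ℝ 2 h) {N₁ N₂ L₁ L₂ : ℝ}
    (hN₁ : ∀ y, ‖iteratedFDeriv ℝ 1 ψ y‖ ≤ N₁)
    (hN₂ : ∀ y, ‖iteratedFDeriv ℝ 2 ψ y‖ ≤ N₂)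
    (hL₁ : ∀ x, ‖iteratedFDeriv ℝ 1 h x‖ ≤ L₁)
    (hL₂ : ∀ x, ‖iteratedFDeriv ℝ 2 h x‖ ≤ L₂) (x : E) :
    ‖iteratedFDeriv ℝ 2 (ψ ∘ h) x‖ ≤ N₂ * L₁ ^ 2 + N₁ * L₂ := by
  have hN₁0 : 0 ≤ N₁ := le_trans (norm_nonneg _) (hN₁ (h x))
  have hN₂0 : 0 ≤ N₂ := le_trans (norm_nonneg _) (hN₂ (h x))
  have hL₁0 : 0 ≤ L₁ := le_trans (norm_nonneg _) (hL₁ x)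
  have hL₂0 : 0 ≤ L₂ := le_trans (norm_nonneg _) (hL₂ x)
  have hψ' : ContDiff ℝ 1 (fderiv ℝ ψ) := hψ.fderiv_right (by norm_num)
  have hh' : ContDiff ℝ 1 (fderiv ℝ h) := hh.fderiv_right (by norm_num)
  have key := fderiv_comp_eq_compL ψ h (hψ.of_le (by norm_num)) (hh.of_le (by norm_num))
  have hD2 : ‖iteratedFDeriv ℝ 2 (ψ ∘ h) x‖
      = ‖iteratedFDeriv ℝ 1 (fderiv ℝ (ψ ∘ h)) x‖ := (norm_iteratedFDeriv_fderiv).symm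
  rw [hD2, key]
  have hf : ContDiff ℝ 1 (fun x => fderiv ℝ ψ (h x)) := hψ'.comp (hh.of_le (by norm_num))
  have bil := (compL ℝ E F G).norm_iteratedFDeriv_le_of_bilinear hf hh' x (n := 1) le_rfl
  refine bil.trans ?_
  have hsum : ∑ i ∈ Finset.range 2, ((1 : ℕ).choose i : ℝ) *
      ‖iteratedFDeriv ℝ i (fun x => fderiv ℝ ψ (h x)) x‖ *
      ‖iteratedFDeriv ℝ (1 - i) (fderiv ℝ h) x‖ ≤ N₂ * L₁ ^ 2 + N₁ * L₂ := by
    rw [Finset.sum_range_succ, Finset.sum_range_succ, Finset.sum_range_zero]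
    simp only [Nat.choose_zero_right, Nat.choose_self, Nat.cast_one, one_mul,
      norm_iteratedFDeriv_zero, Nat.sub_zero, Nat.sub_self]
    have t1 : ‖fderiv ℝ ψ (h x)‖ * ‖iteratedFDeriv ℝ 1 (fderiv ℝ h) x‖ ≤ N₁ * L₂ := by
      rw [norm_iteratedFDeriv_fderiv]
      apply mul_le_mul ?_ (hL₂ x) (norm_nonneg _) hN₁0
      have : ‖fderiv ℝ ψ (h x)‖ = ‖iteratedFDeriv ℝ 1 ψ (h x)‖ := by
        rw [← norm_iteratedFDeriv_fderiv, norm_iteratedFDeriv_zero]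
      rw [this]; exact hN₁ _
    have t2 : ‖iteratedFDeriv ℝ 1 (fun x => fderiv ℝ ψ (h x)) x‖ *
        ‖iteratedFDeriv ℝ 0 (fderiv ℝ h) x‖ ≤ (N₂ * L₁) * L₁ := by
      apply mul_le_mul ?_ ?_ (norm_nonneg _) (by positivity)
      · have := comp_bound1 (fderiv ℝ ψ) h hψ' (hh.of_le (by norm_num))
          (fun y => by rw [norm_iteratedFDeriv_fderiv]; exact hN₂ y) hL₁ x
        exact this
      · rw [norm_iteratedFDeriv_zero]
        have : ‖fderiv ℝ h x‖ = ‖iteratedFDeriv ℝ 1 h x‖ := by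
          rw [← norm_iteratedFDeriv_fderiv, norm_iteratedFDeriv_zero]
        rw [this]; exact hL₁ _
    nlinarith [t1, t2]
  refine le_trans (mul_le_mul_of_nonneg_right (norm_compL_le ℝ E F G) ?_) (by rw [one_mul]; exact hsum)
  apply Finset.sum_nonneg; intro i _; positivity

lemma comp_bound3 (ψ : F → G) (h : E → F)
    (hψ : ContDiff ℝ 3 ψ) (hh : ContDiff ℝ 3 h) {N₁ N₂ N₃ L₁ L₂ L₃ : ℝ}
    (hN₁ : ∀ y, ‖iteratedFDeriv ℝ 1 ψ y‖ ≤ N₁)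
    (hN₂ : ∀ y, ‖iteratedFDeriv ℝ 2 ψ y‖ ≤ N₂)
    (hN₃ : ∀ y, ‖iteratedFDeriv ℝ 3 ψ y‖ ≤ N₃)
    (hL₁ : ∀ x, ‖iteratedFDeriv ℝ 1 h x‖ ≤ L₁)
    (hL₂ : ∀ x, ‖iteratedFDeriv ℝ 2 h x‖ ≤ L₂)
    (hL₃ : ∀ x, ‖iteratedFDeriv ℝ 3 h x‖ ≤ L₃) (x : E) :
    ‖iteratedFDeriv ℝ 3 (ψ ∘ h) x‖ ≤ N₃ * L₁ ^ 3 + 3 * N₂ * L₁ * L₂ + N₁ * L₃ := by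
  have hN₁0 : 0 ≤ N₁ := le_trans (norm_nonneg _) (hN₁ (h x))
  have hN₂0 : 0 ≤ N₂ := le_trans (norm_nonneg _) (hN₂ (h x))
  have hN₃0 : 0 ≤ N₃ := le_trans (norm_nonneg _) (hN₃ (h x))
  have hL₁0 : 0 ≤ L₁ := le_trans (norm_nonneg _) (hL₁ x)
  have hL₂0 : 0 ≤ L₂ := le_trans (norm_nonneg _) (hL₂ x)
  have hL₃0 : 0 ≤ L₃ := le_trans (norm_nonneg _) (hL₃ x)
  have hψ' : ContDiff ℝ 2 (fderiv ℝ ψ) := hψ.fderiv_right (by norm_num)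
  have hh' : ContDiff ℝ 2 (fderiv ℝ h) := hh.fderiv_right (by norm_num)
  have key := fderiv_comp_eq_compL ψ h (hψ.of_le (by norm_num)) (hh.of_le (by norm_num))
  have hD3 : ‖iteratedFDeriv ℝ 3 (ψ ∘ h) x‖
      = ‖iteratedFDeriv ℝ 2 (fderiv ℝ (ψ ∘ h)) x‖ := (norm_iteratedFDeriv_fderiv).symm
  rw [hD3, key]
  have hf : ContDiff ℝ 2 (fun x => fderiv ℝ ψ (h x)) := hψ'.comp (hh.of_le (by norm_num))
  have bil := (compL ℝ E F G).norm_iteratedFDeriv_le_of_bilinear hf hh' x (n := 2) le_rfl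
  refine bil.trans ?_
  have hN₂' : ∀ y, ‖iteratedFDeriv ℝ 1 (fderiv ℝ ψ) y‖ ≤ N₂ := fun y => by
    rw [norm_iteratedFDeriv_fderiv]; exact hN₂ y
  have hN₃' : ∀ y, ‖iteratedFDeriv ℝ 2 (fderiv ℝ ψ) y‖ ≤ N₃ := fun y => by
    rw [norm_iteratedFDeriv_fderiv]; exact hN₃ y
  have hsum : ∑ i ∈ Finset.range 3, ((2 : ℕ).choose i : ℝ) *
      ‖iteratedFDeriv ℝ i (fun x => fderiv ℝ ψ (h x)) x‖ *
      ‖iteratedFDeriv ℝ (2 - i) (fderiv ℝ h) x‖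
      ≤ N₃ * L₁ ^ 3 + 3 * N₂ * L₁ * L₂ + N₁ * L₃ := by
    rw [Finset.sum_range_succ, Finset.sum_range_succ, Finset.sum_range_succ,
      Finset.sum_range_zero]
    simp only [Nat.choose_zero_right, Nat.choose_self, Nat.cast_one, one_mul,
      norm_iteratedFDeriv_zero, Nat.sub_zero, Nat.sub_self, zero_add]
    have t0 : ‖fderiv ℝ ψ (h x)‖ * ‖iteratedFDeriv ℝ 2 (fderiv ℝ h) x‖ ≤ N₁ * L₃ := by
      rw [norm_iteratedFDeriv_fderiv]
      apply mul_le_mul ?_ (hL₃ x) (norm_nonneg _) hN₁0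
      have : ‖fderiv ℝ ψ (h x)‖ = ‖iteratedFDeriv ℝ 1 ψ (h x)‖ := by
        rw [← norm_iteratedFDeriv_fderiv, norm_iteratedFDeriv_zero]
      rw [this]; exact hN₁ _
    have t1 : ‖iteratedFDeriv ℝ 1 (fun x => fderiv ℝ ψ (h x)) x‖ *
        ‖iteratedFDeriv ℝ (2 - 1) (fderiv ℝ h) x‖ ≤ (N₂ * L₁) * L₂ := by
      apply mul_le_mul ?_ ?_ (norm_nonneg _) (by positivity)
      · exact comp_bound1 (fderiv ℝ ψ) h (hψ'.of_le (by norm_num))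
          (hh.of_le (by norm_num)) hN₂' hL₁ x
      · show ‖iteratedFDeriv ℝ 1 (fderiv ℝ h) x‖ ≤ L₂
        rw [norm_iteratedFDeriv_fderiv]; exact hL₂ x
    have t2 : ‖iteratedFDeriv ℝ 2 (fun x => fderiv ℝ ψ (h x)) x‖ *
        ‖iteratedFDeriv ℝ 0 (fderiv ℝ h) x‖ ≤ (N₃ * L₁ ^ 2 + N₂ * L₂) * L₁ := by
      apply mul_le_mul ?_ ?_ (norm_nonneg _) (by positivity)
      · exact comp_bound2 (fderiv ℝ ψ) h hψ' (hh.of_le (by norm_num))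
          hN₂' hN₃' hL₁ hL₂ x
      · rw [norm_iteratedFDeriv_zero]
        have : ‖fderiv ℝ h x‖ = ‖iteratedFDeriv ℝ 1 h x‖ := by
          rw [← norm_iteratedFDeriv_fderiv, norm_iteratedFDeriv_zero]
        rw [this]; exact hL₁ _
    have hc : ((2 : ℕ).choose 1 : ℝ) = 2 := by norm_num
    rw [hc]
    nlinarith [t0, t1, t2]
  refine le_trans (mul_le_mul_of_nonneg_right (norm_compL_le ℝ E F G) ?_) (by rw [one_mul]; exact hsum)
  apply Finset.sum_nonneg; intro i _; positivity

end aux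

/-- The `C³` case of the push-forward norm estimate (via partial Bell polynomials): if
`h : E → F` and `φ : F → ℝ` are `C³` with `‖D^j h‖ ≤ L_j` and `‖D^j φ‖ ≤ M_j`
(`j = 1,2,3`), then for every `x ∈ E`,
`∑_{m=1}^{3} ‖D^m(φ∘h)(x)‖ ≤ max{L₁+L₂+L₃, L₁²+3L₁L₂, L₁³} · (M₁+M₂+M₃)`. -/
theorem composition_C3_estimate
    {E F : Type*} [NormedAddCommGroup E] [NormedSpace ℝ E]
    [NormedAddCommGroup F] [NormedSpace ℝ F]
    (h : E → F) (φ : F → ℝ) (hh : ContDiff ℝ 3 h) (hφ : ContDiff ℝ 3 φ)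
    (L₁ L₂ L₃ M₁ M₂ M₃ : ℝ)
    (hL₁0 : 0 ≤ L₁) (hL₂0 : 0 ≤ L₂) (hL₃0 : 0 ≤ L₃)
    (hM₁0 : 0 ≤ M₁) (hM₂0 : 0 ≤ M₂) (hM₃0 : 0 ≤ M₃)
    (hL₁ : ∀ x, ‖iteratedFDeriv ℝ 1 h x‖ ≤ L₁)
    (hL₂ : ∀ x, ‖iteratedFDeriv ℝ 2 h x‖ ≤ L₂)
    (hL₃ : ∀ x, ‖iteratedFDeriv ℝ 3 h x‖ ≤ L₃)
    (hM₁ : ∀ y, ‖iteratedFDeriv ℝ 1 φ y‖ ≤ M₁)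
    (hM₂ : ∀ y, ‖iteratedFDeriv ℝ 2 φ y‖ ≤ M₂)
    (hM₃ : ∀ y, ‖iteratedFDeriv ℝ 3 φ y‖ ≤ M₃) :
    ∀ x : E,
      ‖iteratedFDeriv ℝ 1 (φ ∘ h) x‖ + ‖iteratedFDeriv ℝ 2 (φ ∘ h) x‖ +
          ‖iteratedFDeriv ℝ 3 (φ ∘ h) x‖
        ≤ max (L₁ + L₂ + L₃) (max (L₁ ^ 2 + 3 * L₁ * L₂) (L₁ ^ 3)) *
            (M₁ + M₂ + M₃) := by
  intro x
  have b1 := comp_bound1 φ h (hφ.of_le (by norm_num)) (hh.of_le (by norm_num)) hM₁ hL₁ x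
  have b2 := comp_bound2 φ h (hφ.of_le (by norm_num)) (hh.of_le (by norm_num))
    hM₁ hM₂ hL₁ hL₂ x
  have b3 := comp_bound3 φ h hφ hh hM₁ hM₂ hM₃ hL₁ hL₂ hL₃ x
  set K := max (L₁ + L₂ + L₃) (max (L₁ ^ 2 + 3 * L₁ * L₂) (L₁ ^ 3)) with hK
  have k1 : L₁ + L₂ + L₃ ≤ K := le_max_left _ _
  have k2 : L₁ ^ 2 + 3 * L₁ * L₂ ≤ K := le_trans (le_max_left _ _) (le_max_right _ _)
  have k3 : L₁ ^ 3 ≤ K := le_trans (le_max_right _ _) (le_max_right _ _)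
  nlinarith [b1, b2, b3, mul_le_mul_of_nonneg_left k1 hM₁0,
    mul_le_mul_of_nonneg_left k2 hM₂0, mul_le_mul_of_nonneg_left k3 hM₃0,
    mul_nonneg hM₁0 hL₁0, mul_nonneg hM₂0 hL₂0]
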